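/- Let H be a nonempty set of classifiers f : X → R each W-Lipschitz with respect to a metric c, and l a loss that is L-Lipschitz in its first argument. Then for any two probability distributions Q, Q' on X, the loss depth satisfies |D(z|Q) − D(z|Q')| ≤ (1/2)LW · W_c(Q,Q'), where W_c is the 1-Wasserstein distance with cost c. -/

import Mathlib

open MeasureTheory

lemma abs_ciInf_sub_ciInf_le {ι : Sort*} [Nonempty ι] {a b : ι → ℝ} {ε : ℝ}
    (ha : BddBelow (Set.range a)) (hb : BddBelow (Set.range b))
    (h : ∀ i, |a i - b i| ≤ ε) : |(⨅ i, a i) - ⨅ i, b i| ≤ ε := by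
  rw [abs_le]
  constructor
  · have h1 : ∀ i, (⨅ i, b i) - ε ≤ a i := fun i => by
      have h2 := ciInf_le hb i
      have h3 := abs_le.1 (h i)
      linarith [h3.1]
    have := le_ciInf h1
    linarith
  · have h1 : ∀ i, (⨅ i, a i) - ε ≤ b i := fun i => by
      have h2 := ciInf_le ha i
      have h3 := abs_le.1 (h i)
      linarith [h3.2]
    have := le_ciInf h1
    linarith

/-- The loss depth `D(z|Q) = inf_{f∈H} [(1/2) E_{x~Q} l₊(f x) + (1/2) l₋(f z)]`
is `(1/2)·L·W`-Lipschitz in the distribution `Q` with respect to the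
1-Wasserstein distance `W_c(Q,Q') = inf over couplings π of ∬ c(x,y) dπ`. -/
theorem lossDepth_lipschitz_in_Q {X : Type*} [MetricSpace X] [MeasurableSpace X]
    [OpensMeasurableSpace X]
    (Q Q' : Measure X) [IsProbabilityMeasure Q] [IsProbabilityMeasure Q']
    (H : Set (X → ℝ)) (hH : H.Nonempty)
    (W L : ℝ) (hW : 0 ≤ W) (hL : 0 ≤ L)
    (hLip : ∀ f ∈ H, ∀ x y : X, |f x - f y| ≤ W * dist x y)
    (lp lm : ℝ → ℝ)
    (hlp0 : ∀ t, 0 ≤ lp t) (hlm0 : ∀ t, 0 ≤ lm t)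
    (hlpLip : ∀ s t : ℝ, |lp s - lp t| ≤ L * |s - t|)
    (hlmLip : ∀ s t : ℝ, |lm s - lm t| ≤ L * |s - t|)
    (hint : ∀ f ∈ H, Integrable (fun x => lp (f x)) Q)
    (hint' : ∀ f ∈ H, Integrable (fun x => lp (f x)) Q')
    (z : X) :
    ENNReal.ofReal
      |(⨅ f : H, ((1/2) * ∫ x, lp (f.1 x) ∂Q + (1/2) * lm (f.1 z)))
        - (⨅ f : H, ((1/2) * ∫ x, lp (f.1 x) ∂Q' + (1/2) * lm (f.1 z)))|
      ≤ ENNReal.ofReal ((1/2) * L * W) *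
        ⨅ π : {π : Measure (X × X) //
            π.map Prod.fst = Q ∧ π.map Prod.snd = Q'},
          ∫⁻ p, ENNReal.ofReal (dist p.1 p.2) ∂π.1 := by
  haveI : Nonempty H := hH.to_subtype
  haveI : Nonempty {π : Measure (X × X) //
      π.map Prod.fst = Q ∧ π.map Prod.snd = Q'} :=
    ⟨⟨Q.prod Q', by simp [Measure.map_fst_prod, Measure.map_snd_prod]⟩⟩
  rw [ENNReal.mul_iInf' (by simp) (fun _ => inferInstance), le_iInf_iff]
  rintro ⟨π, hπ1, hπ2⟩
  simp only
  set I := ∫⁻ p : X × X, ENNReal.ofReal (dist p.1 p.2) ∂π with hIdef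
  have key : ∀ f ∈ H,
      ENNReal.ofReal |(∫ x, lp (f x) ∂Q) - ∫ x, lp (f x) ∂Q'|
        ≤ ENNReal.ofReal (L * W) * I := by
    intro f hf
    have hfc : Continuous f := by
      have : LipschitzWith ⟨W, hW⟩ f := LipschitzWith.of_dist_le_mul (fun x y => by
        rw [Real.dist_eq]; exact hLip f hf x y)
      exact this.continuous
    have hlpc : Continuous lp := by
      have : LipschitzWith ⟨L, hL⟩ lp := LipschitzWith.of_dist_le_mul (fun s t => by
        rw [Real.dist_eq, Real.dist_eq]; exact hlpLip s t)
      exact this.continuous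
    have hg : Continuous fun x => lp (f x) := hlpc.comp hfc
    have h1 : (∫ x, lp (f x) ∂Q) = ∫ p : X × X, lp (f p.1) ∂π := by
      rw [← hπ1, integral_map measurable_fst.aemeasurable hg.aestronglyMeasurable]
    have h2 : (∫ x, lp (f x) ∂Q') = ∫ p : X × X, lp (f p.2) ∂π := by
      rw [← hπ2, integral_map measurable_snd.aemeasurable hg.aestronglyMeasurable]
    have hint1 : Integrable (fun p : X × X => lp (f p.1)) π := by
      have h := hint f hf
      rw [← hπ1] at h
      exact (integrable_map_measure hg.aestronglyMeasurable measurable_fst.aemeasurable).mp h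
    have hint2 : Integrable (fun p : X × X => lp (f p.2)) π := by
      have h := hint' f hf
      rw [← hπ2] at h
      exact (integrable_map_measure hg.aestronglyMeasurable measurable_snd.aemeasurable).mp h
    have hsub : Integrable (fun p : X × X => lp (f p.1) - lp (f p.2)) π := hint1.sub hint2
    rw [h1, h2, ← integral_sub hint1 hint2]
    calc ENNReal.ofReal |∫ p : X × X, (lp (f p.1) - lp (f p.2)) ∂π|
        = ↑‖∫ p : X × X, (lp (f p.1) - lp (f p.2)) ∂π‖₊ := by
          rw [← enorm_eq_nnnorm, ← ofReal_norm, Real.norm_eq_abs]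
      _ ≤ ∫⁻ p : X × X, ↑‖lp (f p.1) - lp (f p.2)‖₊ ∂π :=
          enorm_integral_le_lintegral_enorm _
      _ ≤ ∫⁻ p : X × X, ENNReal.ofReal (L * W) * ENNReal.ofReal (dist p.1 p.2) ∂π := by
          apply lintegral_mono
          intro p
          dsimp only
          rw [← enorm_eq_nnnorm, ← ofReal_norm, Real.norm_eq_abs,
            ← ENNReal.ofReal_mul (mul_nonneg hL hW)]
          apply ENNReal.ofReal_le_ofReal
          calc |lp (f p.1) - lp (f p.2)| ≤ L * |f p.1 - f p.2| := hlpLip _ _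
            _ ≤ L * (W * dist p.1 p.2) :=
                mul_le_mul_of_nonneg_left (hLip f hf _ _) hL
            _ = L * W * dist p.1 p.2 := by ring
      _ = ENNReal.ofReal (L * W) * I := by
          rw [hIdef]
          exact lintegral_const_mul' _ _ ENNReal.ofReal_ne_top
  by_cases hK : ENNReal.ofReal (L * W) * I = ⊤
  · have h0 : ENNReal.ofReal (L * W) ≠ 0 := by
      intro h; rw [h, zero_mul] at hK; simp at hK
    have hLW : 0 < L * W := ENNReal.ofReal_pos.mp (pos_iff_ne_zero.mpr h0)
    have hItop : I = ⊤ := by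
      by_contra h
      exact (ENNReal.mul_ne_top ENNReal.ofReal_ne_top h) hK
    rw [hItop, ENNReal.mul_top]
    · exact le_top
    · simp only [ne_eq, ENNReal.ofReal_eq_zero, not_le]
      nlinarith
  · set K := (ENNReal.ofReal (L * W) * I).toReal with hKdef
    have hbA : BddBelow (Set.range fun f : H =>
        (1/2) * ∫ x, lp (f.1 x) ∂Q + (1/2) * lm (f.1 z)) := by
      refine ⟨0, ?_⟩
      rintro r ⟨f, rfl⟩
      have := integral_nonneg (f := fun x => lp (f.1 x)) (fun x => hlp0 (f.1 x)) (μ := Q)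
      have := hlm0 (f.1 z)
      positivity
    have hbB : BddBelow (Set.range fun f : H =>
        (1/2) * ∫ x, lp (f.1 x) ∂Q' + (1/2) * lm (f.1 z)) := by
      refine ⟨0, ?_⟩
      rintro r ⟨f, rfl⟩
      have := integral_nonneg (f := fun x => lp (f.1 x)) (fun x => hlp0 (f.1 x)) (μ := Q')
      have := hlm0 (f.1 z)
      positivity
    have hdiff : ∀ f : H,
        |((1/2) * ∫ x, lp (f.1 x) ∂Q + (1/2) * lm (f.1 z))
          - ((1/2) * ∫ x, lp (f.1 x) ∂Q' + (1/2) * lm (f.1 z))| ≤ (1/2) * K := by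
      intro f
      have hk := key f.1 f.2
      have h3 : |(∫ x, lp (f.1 x) ∂Q) - ∫ x, lp (f.1 x) ∂Q'| ≤ K :=
        (ENNReal.ofReal_le_iff_le_toReal hK).mp hk
      have heq : ((1/2) * ∫ x, lp (f.1 x) ∂Q + (1/2) * lm (f.1 z))
          - ((1/2) * ∫ x, lp (f.1 x) ∂Q' + (1/2) * lm (f.1 z))
          = (1/2) * ((∫ x, lp (f.1 x) ∂Q) - ∫ x, lp (f.1 x) ∂Q') := by ring
      rw [heq, abs_mul, abs_of_nonneg (by norm_num : (0:ℝ) ≤ 1/2)]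
      linarith
    have hmain := abs_ciInf_sub_ciInf_le hbA hbB hdiff
    refine le_trans (ENNReal.ofReal_le_ofReal hmain) ?_
    rw [ENNReal.ofReal_mul (by norm_num : (0:ℝ) ≤ 1/2), hKdef, ENNReal.ofReal_toReal hK,
      ← mul_assoc, ← ENNReal.ofReal_mul (by norm_num : (0:ℝ) ≤ 1/2), ← mul_assoc]
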